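/- arXiv:1406.4594 — 2 statements merged into one kernel-verified Lean document; each statement's English description precedes it below -/
import Mathlib

section
/- Let F be a minimally parabolic geometrically finite Kleinian group, (G,ρ) ∈ D(F), and î : Λ_F → Λ_G the Cannon-Thurston map. If the cardinality of î⁻¹(ξ) is greater than 1 for a point ξ ∈ Λ_G, then ξ is not a conical limit point of G. -/
noncomputable section

open MeasureTheory Filter Topology Set

/-- `SL(2,ℂ)`. -/
abbrev SL2C := Matrix.SpecialLinearGroup (Fin 2) ℂ

/-- `PSL(2,ℂ)`, the group of Möbius transformations of `S²∞ = ∂ℍ³`. -/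
abbrev PSL2C := SL2C ⧸ Subgroup.center SL2C

/-- Euclidean 3-space. -/
abbrev E3 := EuclideanSpace ℝ (Fin 3)

/-- The closed Poincaré ball `ℍ³ ∪ S²∞`. -/
abbrev PBall : Set E3 := Metric.closedBall (0 : E3) 1

/-- The boundary sphere `S²∞` of the Poincaré ball. -/
def Sph : Set PBall := {x | ‖(x : E3)‖ = 1}

/-- The origin of the Poincaré ball. -/
def origin : PBall := ⟨0, by simp⟩

/-- Inverse hyperbolic cosine. -/
def arcosh (t : ℝ) : ℝ := Real.log (t + Real.sqrt (t ^ 2 - 1))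

/-- The hyperbolic distance in the Poincaré ball model (with junk value `0` if one of
the arguments lies on the boundary sphere). -/
def hdist (x y : PBall) : ℝ :=
  arcosh (1 + 2 * ‖(x : E3) - (y : E3)‖ ^ 2 /
    ((1 - ‖(x : E3)‖ ^ 2) * (1 - ‖(y : E3)‖ ^ 2)))

/-- The point `t·ξ` on the Euclidean radial segment (= hyperbolic geodesic ray) from the
origin toward `ξ`, with `t` clamped into `[0,1]`. -/
def segPt (ξ : PBall) (t : ℝ) : PBall :=
  ⟨(max 0 (min t 1)) • (ξ : E3), by
    have h0 : (0 : ℝ) ≤ max 0 (min t 1) := le_max_left 0 _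
    have h1 : max 0 (min t 1) ≤ 1 := max_le zero_le_one (min_le_right _ _)
    have hξ : ‖(ξ : E3)‖ ≤ 1 := by
      have h := ξ.2
      rwa [Metric.mem_closedBall, dist_zero_right] at h
    rw [Metric.mem_closedBall, dist_zero_right, norm_smul, Real.norm_eq_abs,
      abs_of_nonneg h0]
    calc max 0 (min t 1) * ‖(ξ : E3)‖ ≤ 1 * 1 :=
          mul_le_mul h1 hξ (norm_nonneg _) zero_le_one
      _ = 1 := one_mul 1⟩

section Setting

variable [MulAction PSL2C PBall]

/-- The action of `PSL(2,ℂ)` on the closed Poincaré ball is the Möbius action: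
isometric for the hyperbolic metric, preserving the boundary sphere, continuous
and faithful. -/
def IsMobiusAction : Prop :=
  (∀ (g : PSL2C) (x y : PBall), hdist (g • x) (g • y) = hdist x y) ∧
  (∀ g : PSL2C, (fun x : PBall => g • x) '' Sph = Sph) ∧
  (∀ g : PSL2C, Continuous fun x : PBall => g • x) ∧
  (∀ g : PSL2C, (∀ x : PBall, g • x = x) → g = 1)

/-- The orbit of the origin under a subgroup `G ≤ PSL(2,ℂ)`. -/
def orbitSet (G : Subgroup PSL2C) : Set PBall := {x | ∃ g ∈ G, g • origin = x}

/-- The limit set `Λ_G`: the accumulation points on `S²∞` of the orbit of the origin. -/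
def limitSet (G : Subgroup PSL2C) : Set PBall := closure (orbitSet G) ∩ Sph

/-- The domain of discontinuity `Ω_G = S²∞ ∖ Λ_G`. -/
def domDisc (G : Subgroup PSL2C) : Set PBall := Sph \ limitSet G

/-- Proper discontinuity of the action of `G` on the open ball `ℍ³` (equivalent to
discreteness of `G` in `PSL(2,ℂ)`). -/
def ProperlyDiscontinuous (G : Subgroup PSL2C) : Prop :=
  ∀ K : Set PBall, IsCompact K → Disjoint K Sph →
    {g : PSL2C | g ∈ G ∧ ((fun x : PBall => g • x) '' K ∩ K).Nonempty}.Finite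

/-- A Kleinian group: a discrete, torsion-free, finitely generated subgroup of
`PSL(2,ℂ)`. -/
def IsKleinian (G : Subgroup PSL2C) : Prop :=
  Group.FG G ∧ (∀ g : G, g ≠ 1 → ¬IsOfFinOrder g) ∧ ProperlyDiscontinuous G

/-- Summability of the Poincaré series `g_s(o,o) = Σ_{g∈G} e^{-s d(o, g·o)}`. -/
def PoincareSummable (G : Subgroup PSL2C) (s : ℝ) : Prop :=
  Summable fun g : G => Real.exp (-s * hdist origin ((g : PSL2C) • origin))

/-- The critical exponent `δ_G` of `G`: the abscissa of convergence of the Poincaré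
series. -/
def critExp (G : Subgroup PSL2C) : ℝ := sInf {s : ℝ | 0 ≤ s ∧ PoincareSummable G s}

/-- `G` is of divergence type: the Poincaré series diverges at `s = δ_G`. -/
def DivergenceType (G : Subgroup PSL2C) : Prop := ¬ PoincareSummable G (critExp G)

/-- `G` is non-elementary: its limit set has more than two points. -/
def NonElementary (G : Subgroup PSL2C) : Prop :=
  ∃ a b c : PBall, a ∈ limitSet G ∧ b ∈ limitSet G ∧ c ∈ limitSet G ∧
    a ≠ b ∧ a ≠ c ∧ b ≠ c

/-- The conical limit set `Λ_{G,c}`: points of `Λ_G` approached by infinitely many orbit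
points lying within a bounded hyperbolic distance of the geodesic ray from the origin
to the point. -/
def conicalLimitSet (G : Subgroup PSL2C) : Set PBall :=
  {ξ | ξ ∈ limitSet G ∧ ∃ C : ℝ,
    {g : PSL2C | g ∈ G ∧ ∃ t ∈ Set.Ico (0 : ℝ) 1,
      hdist (g • origin) (segPt ξ t) ≤ C}.Infinite}

/-- A parabolic element: a nontrivial element with exactly one fixed point on `S²∞`. -/
def IsParabolic (g : PSL2C) : Prop :=
  g ≠ 1 ∧ ∃! ξ : PBall, ξ ∈ Sph ∧ g • ξ = ξ

/-- A bounded parabolic fixed point of `G`: a parabolic fixed point whose stabiliser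
acts cocompactly on `Λ_G` minus the point. -/
def IsBoundedParabolicPt (G : Subgroup PSL2C) (p : PBall) : Prop :=
  (∃ g ∈ G, IsParabolic g ∧ g • p = p) ∧
  ∃ K : Set PBall, IsCompact K ∧ K ⊆ limitSet G \ {p} ∧
    ∀ x ∈ limitSet G \ {p}, ∃ g ∈ G, g • p = p ∧ x ∈ (fun y : PBall => g • y) '' K

/-- Geometric finiteness (in the Beardon–Maskit/Bowditch form: every limit point is
conical or a bounded parabolic fixed point). -/
def GeometricallyFinite (G : Subgroup PSL2C) : Prop :=
  limitSet G ⊆ conicalLimitSet G ∪ {p | IsBoundedParabolicPt G p}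

/-- `G` is minimally parabolic: every parabolic element of `G` lies in a rank-two free
abelian subgroup of `G`. -/
def MinimallyParabolic (G : Subgroup PSL2C) : Prop :=
  ∀ g ∈ G, IsParabolic g →
    ∃ A : Subgroup PSL2C, A ≤ G ∧ g ∈ A ∧ Nonempty (A ≃* Multiplicative (ℤ × ℤ))

/-- The Busemann function `b_{o,ξ}(y)` of the ball model, normalised so that
`b_{o,ξ}(o) = 0`. -/
def busemann (ξ y : PBall) : ℝ :=
  Real.log (‖(ξ : E3) - (y : E3)‖ ^ 2 / (1 - ‖(y : E3)‖ ^ 2))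

/-- `μ` is a conformal measure of dimension `s` for `G` based at `x`: a finite nonzero
measure supported on `Λ_G`, quasi-invariant under `G` with Radon–Nikodym cocycle
`e^{-s·b}` given by the Busemann cocycle. -/
def IsConformalMeasure (G : Subgroup PSL2C) (x : PBall) (s : ℝ) (μ : Measure PBall) :
    Prop :=
  IsFiniteMeasure μ ∧ μ ≠ 0 ∧ μ ((limitSet G)ᶜ) = 0 ∧
  ∀ g ∈ G, ∀ A : Set PBall, MeasurableSet A →
    μ ((fun ξ : PBall => g • ξ) '' A) =
      ∫⁻ ξ in A,
        ENNReal.ofReal (Real.exp (-s * (busemann ξ (g⁻¹ • x) - busemann ξ x))) ∂μ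

/-- The Patterson–Sullivan measure of `G` based at `x`: a conformal measure of dimension
the critical exponent `δ_G`. -/
def IsPattersonSullivan (G : Subgroup PSL2C) (x : PBall) (μ : Measure PBall) : Prop :=
  IsConformalMeasure G x (critExp G) μ

/-- `ρ` represents a point of the deformation space `D(F)`: a faithful discrete
representation of `F` in `PSL(2,ℂ)` (with torsion-free finitely generated image). -/
def InDeformationSpace (F : Subgroup PSL2C) (ρ : F →* PSL2C) : Prop :=
  Function.Injective ρ ∧ IsKleinian ρ.range

/-- There is a homeomorphism from `ℍ³/F` to `ℍ³/ρ(F)` inducing `ρ` between the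
fundamental groups; equivalently, there is a `ρ`-equivariant homeomorphism between the
open balls. -/
def InducedByHomeo (F : Subgroup PSL2C) (ρ : F →* PSL2C) : Prop :=
  ∃ Φ Ψ : PBall → PBall,
    ContinuousOn Φ Sphᶜ ∧ MapsTo Φ Sphᶜ Sphᶜ ∧
    ContinuousOn Ψ Sphᶜ ∧ MapsTo Ψ Sphᶜ Sphᶜ ∧
    (∀ x ∈ (Sphᶜ : Set PBall), Ψ (Φ x) = x ∧ Φ (Ψ x) = x) ∧
    ∀ (f : F), ∀ x ∈ (Sphᶜ : Set PBall), Φ ((f : PSL2C) • x) = ρ f • Φ x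

/-- `ι` is the Cannon–Thurston map of `ρ ∈ D(F)`: the continuous `ρ`-equivariant
extension to `Λ_F` of the orbit map `F·o → ρ(F)·o`, mapping `Λ_F` onto `Λ_{ρ(F)}`. -/
def IsCannonThurston (F : Subgroup PSL2C) (ρ : F →* PSL2C) (ι : PBall → PBall) : Prop :=
  MapsTo ι (limitSet F) (limitSet ρ.range) ∧
  SurjOn ι (limitSet F) (limitSet ρ.range) ∧
  ContinuousOn ι (limitSet F) ∧
  (∀ (f : F), ∀ ξ ∈ limitSet F, ι ((f : PSL2C) • ξ) = ρ f • ι ξ) ∧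
  ∀ (σ : ℕ → F), ∀ ξ ∈ limitSet F,
    Tendsto (fun n => (σ n : PSL2C) • origin) atTop (𝓝 ξ) →
    Tendsto (fun n => (ρ (σ n) : PSL2C) • origin) atTop (𝓝 (ι ξ))

/-- `S^{(2)}`: the set of pairs of distinct points of `S`. -/
def pairSet (S : Set PBall) : Set (PBall × PBall) :=
  {p | p.1 ∈ S ∧ p.2 ∈ S ∧ p.1 ≠ p.2}

/-- `End_S(ι) = {(ξ₁,ξ₂) ∈ S^{(2)} : ι ξ₁ = ι ξ₂}`. -/
def EndPairs (S : Set PBall) (ι : PBall → PBall) : Set (PBall × PBall) :=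
  {p | p ∈ pairSet S ∧ ι p.1 = ι p.2}

/-- `end_S(ι) = proj₁(End_S(ι))`. -/
def endSet (S : Set PBall) (ι : PBall → PBall) : Set PBall :=
  Prod.fst '' EndPairs S ι

end Setting

section AuxProof

variable [MulAction PSL2C PBall]

namespace JO

/-- `1 - ‖x‖²`. -/
def lamE (x : PBall) : ℝ := 1 - ‖(x : E3)‖ ^ 2

lemma pnorm_le_one (x : PBall) : ‖(x : E3)‖ ≤ 1 := by
  have h := x.2
  rwa [Metric.mem_closedBall, dist_zero_right] at h

lemma lamE_nonneg (x : PBall) : 0 ≤ lamE x := by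
  have h := pnorm_le_one x
  have h2 : ‖(x : E3)‖ ^ 2 ≤ 1 := by nlinarith [norm_nonneg (x : E3)]
  simp only [lamE]; linarith

lemma lamE_le_one (x : PBall) : lamE x ≤ 1 := by
  have : (0:ℝ) ≤ ‖(x : E3)‖ ^ 2 := sq_nonneg _
  simp only [lamE]; linarith

lemma mem_sph_iff (x : PBall) : x ∈ Sph ↔ ‖(x : E3)‖ = 1 := Iff.rfl

lemma lamE_eq_zero {x : PBall} (hx : x ∈ Sph) : lamE x = 0 := by
  simp [lamE, (mem_sph_iff x).mp hx]

lemma lam_pos_of_not_sph {x : PBall} (hx : x ∉ Sph) : 0 < lamE x := by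
  have h1 : ‖(x : E3)‖ ≠ 1 := fun h => hx ((mem_sph_iff x).mpr h)
  have h2 : ‖(x : E3)‖ < 1 := lt_of_le_of_ne (pnorm_le_one x) h1
  have := norm_nonneg (x : E3)
  simp only [lamE]; nlinarith

lemma not_sph_of_lam_pos {x : PBall} (hx : 0 < lamE x) : x ∉ Sph := by
  intro h; rw [lamE_eq_zero h] at hx; exact lt_irrefl 0 hx

lemma arcosh_strictMono {s t : ℝ} (hs : 1 ≤ s) (hst : s < t) : arcosh s < arcosh t := by
  unfold arcosh
  have h1 : (0:ℝ) < s + Real.sqrt (s ^ 2 - 1) := by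
    have := Real.sqrt_nonneg (s ^ 2 - 1); linarith
  apply Real.log_lt_log h1
  have h2 : Real.sqrt (s ^ 2 - 1) ≤ Real.sqrt (t ^ 2 - 1) := by
    apply Real.sqrt_le_sqrt; nlinarith
  linarith

lemma le_arcosh_cosh (C : ℝ) : C ≤ arcosh (Real.cosh C) := by
  unfold arcosh
  have h1 : Real.sqrt (Real.cosh C ^ 2 - 1) = |Real.sinh C| := by
    rw [show Real.cosh C ^ 2 - 1 = Real.sinh C ^ 2 by nlinarith [Real.cosh_sq C]]
    exact Real.sqrt_sq_eq_abs _
  rw [h1]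
  have h2 : Real.exp C ≤ Real.cosh C + |Real.sinh C| := by
    have h3 := le_abs_self (Real.sinh C)
    have h4 := Real.sinh_add_cosh C
    linarith
  calc C = Real.log (Real.exp C) := (Real.log_exp C).symm
    _ ≤ _ := Real.log_le_log (Real.exp_pos C) h2

lemma arcosh_inj {A B : ℝ} (hA : 0 ≤ A) (hB : 0 ≤ B)
    (h : arcosh (1 + 2 * A) = arcosh (1 + 2 * B)) : A = B := by
  rcases lt_trichotomy A B with hlt | heq | hgt
  · exact absurd h (ne_of_lt (arcosh_strictMono (by linarith) (by linarith)))
  · exact heq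
  · exact absurd h.symm (ne_of_lt (arcosh_strictMono (by linarith) (by linarith)))

lemma hdist_eq (x y : PBall) :
    hdist x y = arcosh (1 + 2 * ‖(x : E3) - (y : E3)‖ ^ 2 / (lamE x * lamE y)) := rfl

lemma smul_mem_sph (hact : IsMobiusAction) (g : PSL2C) {x : PBall} (hx : x ∈ Sph) :
    (g • x : PBall) ∈ Sph := by
  have h := hact.2.1 g
  rw [← h]
  exact ⟨x, hx, rfl⟩

lemma smul_mem_sph_iff (hact : IsMobiusAction) (g : PSL2C) (x : PBall) :
    (g • x : PBall) ∈ Sph ↔ x ∈ Sph := by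
  constructor
  · intro h
    have h2 := smul_mem_sph hact g⁻¹ h
    rwa [inv_smul_smul] at h2
  · exact smul_mem_sph hact g

lemma lam_smul_pos (hact : IsMobiusAction) (g : PSL2C) {x : PBall} (hx : 0 < lamE x) :
    0 < lamE (g • x) := by
  apply lam_pos_of_not_sph
  rw [smul_mem_sph_iff hact]
  exact not_sph_of_lam_pos hx

/-- The fundamental conformality identity. -/
lemma fund_id (hact : IsMobiusAction) (g : PSL2C) (u v : PBall) :
    ‖((g • u : PBall) : E3) - ((g • v : PBall) : E3)‖ ^ 2 * (lamE u * lamE v)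
      = ‖(u : E3) - (v : E3)‖ ^ 2 * (lamE (g • u) * lamE (g • v)) := by
  by_cases hu : u ∈ Sph
  · rw [lamE_eq_zero hu, lamE_eq_zero (smul_mem_sph hact g hu)]; ring
  by_cases hv : v ∈ Sph
  · rw [lamE_eq_zero hv, lamE_eq_zero (smul_mem_sph hact g hv)]; ring
  have hlu : 0 < lamE u := lam_pos_of_not_sph hu
  have hlv : 0 < lamE v := lam_pos_of_not_sph hv
  have hlgu : 0 < lamE (g • u) := lam_smul_pos hact g hlu
  have hlgv : 0 < lamE (g • v) := lam_smul_pos hact g hlv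
  have hiso := hact.1 g u v
  rw [hdist_eq, hdist_eq] at hiso
  rw [mul_div_assoc, mul_div_assoc] at hiso
  have h2 := arcosh_inj
    (div_nonneg (sq_nonneg _) (le_of_lt (mul_pos hlgu hlgv)))
    (div_nonneg (sq_nonneg _) (le_of_lt (mul_pos hlu hlv))) hiso
  rw [div_eq_div_iff (mul_pos hlgu hlgv).ne' (mul_pos hlu hlv).ne'] at h2
  linarith [h2]

lemma segPt_val (ξ : PBall) {t : ℝ} (h0 : 0 ≤ t) (h1 : t ≤ 1) :
    ((segPt ξ t : PBall) : E3) = t • (ξ : E3) := by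
  simp [segPt, min_eq_left h1, max_eq_right h0]

lemma segPt_one (ξ : PBall) : segPt ξ 1 = ξ := by
  apply Subtype.ext
  rw [segPt_val ξ zero_le_one le_rfl, one_smul]

lemma segPt_norm {ξ : PBall} (hξ : ξ ∈ Sph) {t : ℝ} (h0 : 0 ≤ t) (h1 : t ≤ 1) :
    ‖((segPt ξ t : PBall) : E3)‖ = t := by
  rw [segPt_val ξ h0 h1, norm_smul, Real.norm_eq_abs, abs_of_nonneg h0,
    (mem_sph_iff ξ).mp hξ, mul_one]

lemma lamE_segPt {ξ : PBall} (hξ : ξ ∈ Sph) {t : ℝ} (h0 : 0 ≤ t) (h1 : t ≤ 1) :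
    lamE (segPt ξ t) = 1 - t ^ 2 := by
  rw [lamE, segPt_norm hξ h0 h1]

lemma segPt_continuous (ξ : PBall) : Continuous fun t : ℝ => segPt ξ t := by
  apply Continuous.subtype_mk
  exact (continuous_const.max (continuous_id.min continuous_const)).smul continuous_const

lemma origin_val : ((origin : PBall) : E3) = 0 := rfl

lemma lamE_origin : lamE origin = 1 := by simp [lamE, origin_val]

lemma tendsto_smul_segPt (hact : IsMobiusAction) (g : PSL2C) (ξ : PBall) :
    Tendsto (fun t : ℝ => (g • segPt ξ t : PBall)) (𝓝[<] (1:ℝ)) (𝓝 (g • ξ)) := by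
  have hc : Continuous fun t : ℝ => (g • segPt ξ t : PBall) :=
    (hact.2.2.1 g).comp (segPt_continuous ξ)
  have h1 : Tendsto (fun t : ℝ => (g • segPt ξ t : PBall)) (𝓝 (1:ℝ))
      (𝓝 (g • segPt ξ 1)) := hc.tendsto 1
  rw [segPt_one] at h1
  exact h1.mono_left nhdsWithin_le_nhds


set_option maxHeartbeats 1000000 in
/-- Algebraic identity at parameter `t`. -/
lemma key_id (hact : IsMobiusAction) (h : PSL2C) {x y : PBall}
    (hx : x ∈ Sph) (hy : y ∈ Sph) {t : ℝ} (ht0 : 0 < t) (ht1 : t < 1) :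
    ‖(x : E3) - (y : E3)‖ ^ 2 *
      (‖((h • segPt x t : PBall) : E3) - ((h • origin : PBall) : E3)‖ ^ 2 *
       ‖((h • segPt y t : PBall) : E3) - ((h • origin : PBall) : E3)‖ ^ 2)
      = t ^ 2 * (lamE (h • origin : PBall)) ^ 2 *
        ‖((h • segPt x t : PBall) : E3) - ((h • segPt y t : PBall) : E3)‖ ^ 2 := by
  have ht0' := le_of_lt ht0
  have ht1' := le_of_lt ht1
  have hden : (0:ℝ) < 1 - t ^ 2 := by nlinarith
  have hlupos : 0 < lamE (segPt x t) := by rw [lamE_segPt hx ht0' ht1']; exact hden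
  have hlvpos : 0 < lamE (segPt y t) := by rw [lamE_segPt hy ht0' ht1']; exact hden
  have hαa : 0 < lamE (h • segPt x t : PBall) := lam_smul_pos hact h hlupos
  have hαb : 0 < lamE (h • segPt y t : PBall) := lam_smul_pos hact h hlvpos
  have huv : ‖((segPt x t : PBall) : E3) - ((segPt y t : PBall) : E3)‖ ^ 2
      = t ^ 2 * ‖(x : E3) - (y : E3)‖ ^ 2 := by
    rw [segPt_val x ht0' ht1', segPt_val y ht0' ht1', ← smul_sub, norm_smul,
      Real.norm_eq_abs, abs_of_nonneg ht0']
    ring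
  have e1 := fund_id hact h (segPt x t) origin
  rw [lamE_origin, mul_one, origin_val, sub_zero, segPt_norm hx ht0' ht1',
    lamE_segPt hx ht0' ht1'] at e1
  have e2 := fund_id hact h (segPt y t) origin
  rw [lamE_origin, mul_one, origin_val, sub_zero, segPt_norm hy ht0' ht1',
    lamE_segPt hy ht0' ht1'] at e2
  have e3 := fund_id hact h (segPt x t) (segPt y t)
  rw [huv, lamE_segPt hx ht0' ht1', lamE_segPt hy ht0' ht1'] at e3
  set W : ℝ := ‖(x : E3) - (y : E3)‖ ^ 2 with hW
  set Xa : ℝ := ‖((h • segPt x t : PBall) : E3) - ((h • origin : PBall) : E3)‖ ^ 2 with hXa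
  set Xb : ℝ := ‖((h • segPt y t : PBall) : E3) - ((h • origin : PBall) : E3)‖ ^ 2 with hXb
  set Z : ℝ := ‖((h • segPt x t : PBall) : E3) - ((h • segPt y t : PBall) : E3)‖ ^ 2 with hZ
  set L : ℝ := lamE (h • origin : PBall) with hL
  set A : ℝ := lamE (h • segPt x t : PBall) with hA
  set B : ℝ := lamE (h • segPt y t : PBall) with hB
  -- e1 : Xa * (1 - t^2) = t^2 * (A * L)
  -- e2 : Xb * (1 - t^2) = t^2 * (B * L)
  -- e3 : Z * ((1-t^2) * (1-t^2)) = t^2 * W * (A * B)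
  have hcanc : ((1:ℝ) - t ^ 2) ^ 2 ≠ 0 := pow_ne_zero 2 hden.ne'
  apply mul_right_cancel₀ hcanc
  linear_combination W * Xb * (1 - t ^ 2) * e1 + W * t ^ 2 * A * L * e2
    - t ^ 2 * L ^ 2 * e3

set_option maxHeartbeats 1000000 in
/-- Convergence-type product estimate. -/
lemma prod_bound (hact : IsMobiusAction) (h : PSL2C) {x y : PBall}
    (hx : x ∈ Sph) (hy : y ∈ Sph) :
    ‖(x : E3) - (y : E3)‖ ^ 2 *
      (‖((h • x : PBall) : E3) - ((h • origin : PBall) : E3)‖ ^ 2 *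
       ‖((h • y : PBall) : E3) - ((h • origin : PBall) : E3)‖ ^ 2)
      ≤ 4 * (lamE (h • origin : PBall)) ^ 2 := by
  have hmemIoo : Ioo (0:ℝ) 1 ∈ 𝓝[<] (1:ℝ) := Ioo_mem_nhdsLT_of_mem ⟨zero_lt_one, le_rfl⟩
  have hvalx : Tendsto (fun t : ℝ => ((h • segPt x t : PBall) : E3)) (𝓝[<] (1:ℝ))
      (𝓝 ((h • x : PBall) : E3)) :=
    (continuous_subtype_val.tendsto _).comp (tendsto_smul_segPt hact h x)
  have hvaly : Tendsto (fun t : ℝ => ((h • segPt y t : PBall) : E3)) (𝓝[<] (1:ℝ))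
      (𝓝 ((h • y : PBall) : E3)) :=
    (continuous_subtype_val.tendsto _).comp (tendsto_smul_segPt hact h y)
  have ta : Tendsto (fun t : ℝ => ‖((h • segPt x t : PBall) : E3) - ((h • origin : PBall) : E3)‖ ^ 2)
      (𝓝[<] (1:ℝ)) (𝓝 (‖((h • x : PBall) : E3) - ((h • origin : PBall) : E3)‖ ^ 2)) :=
    ((hvalx.sub tendsto_const_nhds).norm).pow 2
  have tb : Tendsto (fun t : ℝ => ‖((h • segPt y t : PBall) : E3) - ((h • origin : PBall) : E3)‖ ^ 2)
      (𝓝[<] (1:ℝ)) (𝓝 (‖((h • y : PBall) : E3) - ((h • origin : PBall) : E3)‖ ^ 2)) :=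
    ((hvaly.sub tendsto_const_nhds).norm).pow 2
  have tz : Tendsto (fun t : ℝ => ‖((h • segPt x t : PBall) : E3) - ((h • segPt y t : PBall) : E3)‖ ^ 2)
      (𝓝[<] (1:ℝ)) (𝓝 (‖((h • x : PBall) : E3) - ((h • y : PBall) : E3)‖ ^ 2)) :=
    ((hvalx.sub hvaly).norm).pow 2
  have tt : Tendsto (fun t : ℝ => t ^ 2) (𝓝[<] (1:ℝ)) (𝓝 ((1:ℝ) ^ 2)) :=
    ((continuous_pow 2).tendsto (1:ℝ)).mono_left nhdsWithin_le_nhds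
  have tlhs : Tendsto (fun t : ℝ => ‖(x : E3) - (y : E3)‖ ^ 2 *
      (‖((h • segPt x t : PBall) : E3) - ((h • origin : PBall) : E3)‖ ^ 2 *
       ‖((h • segPt y t : PBall) : E3) - ((h • origin : PBall) : E3)‖ ^ 2)) (𝓝[<] (1:ℝ))
      (𝓝 (‖(x : E3) - (y : E3)‖ ^ 2 *
        (‖((h • x : PBall) : E3) - ((h • origin : PBall) : E3)‖ ^ 2 *
         ‖((h • y : PBall) : E3) - ((h • origin : PBall) : E3)‖ ^ 2))) :=
    tendsto_const_nhds.mul (ta.mul tb)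
  have trhs : Tendsto (fun t : ℝ => t ^ 2 * (lamE (h • origin : PBall)) ^ 2 *
      ‖((h • segPt x t : PBall) : E3) - ((h • segPt y t : PBall) : E3)‖ ^ 2) (𝓝[<] (1:ℝ))
      (𝓝 ((1:ℝ) ^ 2 * (lamE (h • origin : PBall)) ^ 2 *
        ‖((h • x : PBall) : E3) - ((h • y : PBall) : E3)‖ ^ 2)) :=
    (tt.mul tendsto_const_nhds).mul tz
  have heq := tendsto_nhds_unique tlhs (trhs.congr' (by
    filter_upwards [hmemIoo] with t ht using (key_id hact h hx hy ht.1 ht.2).symm))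
  rw [heq]
  have h1 : ‖((h • x : PBall) : E3) - ((h • y : PBall) : E3)‖ ≤ 2 := by
    have h2 := norm_sub_le ((h • x : PBall) : E3) ((h • y : PBall) : E3)
    have h3 := pnorm_le_one (h • x : PBall)
    have h4 := pnorm_le_one (h • y : PBall)
    linarith
  have h2 : (0:ℝ) ≤ ‖((h • x : PBall) : E3) - ((h • y : PBall) : E3)‖ := norm_nonneg _
  have h5 : ‖((h • x : PBall) : E3) - ((h • y : PBall) : E3)‖ ^ 2 ≤ 4 := by nlinarith
  have h6 := mul_le_mul_of_nonneg_left h5 (sq_nonneg (lamE (h • origin : PBall)))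
  linarith [h6]


set_option maxHeartbeats 1000000 in
/-- Separation estimate at conical approximation. -/
lemma separation (hact : IsMobiusAction) {C : ℝ} {g : PSL2C} {ξ : PBall} (hξ : ξ ∈ Sph)
    {t' : ℝ} (ht'0 : 0 ≤ t') (ht'1 : t' < 1)
    (hC : hdist (g • origin) (segPt ξ t') ≤ C)
    (hsmall : lamE (g⁻¹ • origin : PBall) ≤ (1 / (1 + (Real.cosh C - 1) / 2)) / 4) :
    3 * (1 / (1 + (Real.cosh C - 1) / 2)) ^ 2 / 16
      ≤ ‖((g⁻¹ • ξ : PBall) : E3) - ((g⁻¹ • origin : PBall) : E3)‖ := by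
  set κ : ℝ := (Real.cosh C - 1) / 2 with hκdef
  have hκ : 0 ≤ κ := by have := Real.one_le_cosh C; rw [hκdef]; linarith
  set β : ℝ := 1 / (1 + κ) with hβdef
  have hβpos : 0 < β := by rw [hβdef]; positivity
  have hβ1 : β ≤ 1 := by rw [hβdef]; rw [div_le_one (by linarith)]; linarith
  have hp'sph : segPt ξ t' ∉ Sph := by
    rw [mem_sph_iff, segPt_norm hξ ht'0 (le_of_lt ht'1)]
    exact ne_of_lt ht'1
  have hlp' : lamE (segPt ξ t') = 1 - t' ^ 2 := lamE_segPt hξ ht'0 (le_of_lt ht'1)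
  have hlp'pos : 0 < lamE (segPt ξ t') := by rw [hlp']; nlinarith
  -- q := g⁻¹ • (segPt ξ t'), p := g⁻¹ • origin
  have hq : hdist origin ((g⁻¹ • segPt ξ t' : PBall)) ≤ C := by
    have h0 := hact.1 g⁻¹ (g • origin) (segPt ξ t')
    rw [inv_smul_smul] at h0
    rw [h0]; exact hC
  have hqpos : 0 < lamE (g⁻¹ • segPt ξ t' : PBall) := lam_smul_pos hact g⁻¹ hlp'pos
  have e0 := fund_id hact g⁻¹ origin (segPt ξ t')
  rw [lamE_origin, one_mul, origin_val, zero_sub, norm_neg, segPt_norm hξ ht'0 (le_of_lt ht'1),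
    hlp'] at e0
  set q : PBall := (g⁻¹ • segPt ξ t' : PBall) with hqdef
  set p : PBall := (g⁻¹ • origin : PBall) with hpdef
  -- β ≤ lamE q
  have harg : 1 + 2 * (‖(q : E3)‖ ^ 2 / lamE q) ≤ Real.cosh C := by
    by_contra hcon
    push_neg at hcon
    have h5 := arcosh_strictMono (Real.one_le_cosh C) hcon
    have h6 : hdist origin q = arcosh (1 + 2 * (‖(q : E3)‖ ^ 2 / lamE q)) := by
      rw [hdist_eq, lamE_origin, one_mul, origin_val, zero_sub, norm_neg, mul_div_assoc]
    have h7 := le_arcosh_cosh C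
    rw [h6] at hq
    linarith
  have hβq : β ≤ lamE q := by
    have h8 : ‖(q : E3)‖ ^ 2 / lamE q ≤ κ := by rw [hκdef]; linarith
    have h9 : ‖(q : E3)‖ ^ 2 ≤ κ * lamE q := by
      rw [div_le_iff₀ hqpos] at h8; linarith
    have h10 : lamE q = 1 - ‖(q : E3)‖ ^ 2 := rfl
    rw [hβdef, div_le_iff₀ (by linarith : (0:ℝ) < 1 + κ)]
    nlinarith
  have hqle1 := lamE_le_one q
  have hlamp0 := lamE_nonneg p
  -- e0 : ‖p - q‖² * (1 - t'²) = t'² * (lamE p * lamE q)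
  -- ‖p - q‖ ≥ 3β/8
  have hpq : 3 * β / 8 ≤ ‖(p : E3) - (q : E3)‖ := by
    have h11 : (‖(p : E3)‖ - ‖(q : E3)‖) * (‖(p : E3)‖ + ‖(q : E3)‖) = lamE q - lamE p := by
      have : lamE p = 1 - ‖(p : E3)‖ ^ 2 := rfl
      have : lamE q = 1 - ‖(q : E3)‖ ^ 2 := rfl
      simp only [lamE]; ring
    have h12 : 3 * β / 4 ≤ lamE q - lamE p := by linarith
    have h13 := norm_sub_norm_le (p : E3) (q : E3)
    have h14 := pnorm_le_one p
    have h15 := pnorm_le_one q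
    have h16 := norm_nonneg (p : E3)
    have h17 := norm_nonneg (q : E3)
    have hd0 : 0 < ‖(p : E3)‖ - ‖(q : E3)‖ := by nlinarith
    have hd1 : (‖(p : E3)‖ - ‖(q : E3)‖) * (‖(p : E3)‖ + ‖(q : E3)‖)
        ≤ (‖(p : E3)‖ - ‖(q : E3)‖) * 2 := by
      apply mul_le_mul_of_nonneg_left _ hd0.le
      linarith
    linarith
  -- lamE p ≥ (3β/8)² (1 - t'²)
  have hlp9 : (3 * β / 8) ^ 2 * (1 - t' ^ 2) ≤ lamE p := by
    have h18 : ‖(p : E3) - (q : E3)‖ ^ 2 * (1 - t' ^ 2) ≤ lamE p := by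
      have h19 : t' ^ 2 * (lamE p * lamE q) ≤ lamE p := by
        have h19a : t' ^ 2 * lamE q ≤ 1 := by nlinarith
        have h19b := mul_le_mul_of_nonneg_left h19a hlamp0
        nlinarith [h19b]
      linarith [e0]
    have h20 : (3 * β / 8) ^ 2 ≤ ‖(p : E3) - (q : E3)‖ ^ 2 := by nlinarith
    nlinarith
  -- limit identity
  have hmemIoo : Ioo (0:ℝ) 1 ∈ 𝓝[<] (1:ℝ) := Ioo_mem_nhdsLT_of_mem ⟨zero_lt_one, le_rfl⟩
  have hval : Tendsto (fun t : ℝ => ((g⁻¹ • segPt ξ t : PBall) : E3)) (𝓝[<] (1:ℝ))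
      (𝓝 ((g⁻¹ • ξ : PBall) : E3)) :=
    (continuous_subtype_val.tendsto _).comp (tendsto_smul_segPt hact g⁻¹ ξ)
  have key3 : ∀ t ∈ Ioo (0:ℝ) 1,
      ‖((g⁻¹ • segPt ξ t : PBall) : E3) - (p : E3)‖ ^ 2 * (t - t') ^ 2 * lamE q
        = t ^ 2 * lamE p * (1 - t' ^ 2) *
          ‖((g⁻¹ • segPt ξ t : PBall) : E3) - (q : E3)‖ ^ 2 := by
    intro t ht
    obtain ⟨ht0, ht1⟩ := ht
    have ht0' := le_of_lt ht0
    have ht1' := le_of_lt ht1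
    have hlu : lamE (segPt ξ t) = 1 - t ^ 2 := lamE_segPt hξ ht0' ht1'
    have hlupos : 0 < lamE (segPt ξ t) := by rw [hlu]; nlinarith
    have hα : 0 < lamE (g⁻¹ • segPt ξ t : PBall) := lam_smul_pos hact g⁻¹ hlupos
    have e1 := fund_id hact g⁻¹ (segPt ξ t) origin
    rw [lamE_origin, mul_one, origin_val, sub_zero, segPt_norm hξ ht0' ht1', hlu,
      ← hpdef] at e1
    have e2 := fund_id hact g⁻¹ (segPt ξ t) (segPt ξ t')
    rw [← hqdef] at e2
    have huv : ‖((segPt ξ t : PBall) : E3) - ((segPt ξ t' : PBall) : E3)‖ ^ 2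
        = (t - t') ^ 2 := by
      rw [segPt_val ξ ht0' ht1', segPt_val ξ ht'0 (le_of_lt ht'1), ← sub_smul, norm_smul,
        Real.norm_eq_abs, (mem_sph_iff ξ).mp hξ, mul_one, sq_abs]
    rw [huv, hlu, hlp'] at e2
    set X : ℝ := ‖((g⁻¹ • segPt ξ t : PBall) : E3) - (p : E3)‖ ^ 2 with hX
    set Y : ℝ := ‖((g⁻¹ • segPt ξ t : PBall) : E3) - (q : E3)‖ ^ 2 with hY
    set α : ℝ := lamE (g⁻¹ • segPt ξ t : PBall) with hα2
    -- e1 : X * (1 - t^2) = t^2 * (α * lamE p)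
    -- e2 : Y * ((1 - t^2) * (1 - t'^2)) = (t-t')^2 * (α * lamE q)
    apply mul_left_cancel₀ hα.ne'
    linear_combination (1 - t' ^ 2) * Y * e1 - X * e2
  have tX : Tendsto (fun t : ℝ => ‖((g⁻¹ • segPt ξ t : PBall) : E3) - (p : E3)‖ ^ 2 *
      (t - t') ^ 2 * lamE q) (𝓝[<] (1:ℝ))
      (𝓝 (‖((g⁻¹ • ξ : PBall) : E3) - (p : E3)‖ ^ 2 * ((1:ℝ) - t') ^ 2 * lamE q)) := by
    apply Tendsto.mul _ tendsto_const_nhds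
    apply Tendsto.mul ((hval.sub tendsto_const_nhds).norm.pow 2)
    have : Tendsto (fun t : ℝ => (t - t') ^ 2) (𝓝 (1:ℝ)) (𝓝 (((1:ℝ) - t') ^ 2)) := by
      exact (((continuous_id.sub continuous_const).pow 2).tendsto (1:ℝ))
    exact this.mono_left nhdsWithin_le_nhds
  have tY : Tendsto (fun t : ℝ => t ^ 2 * lamE p * (1 - t' ^ 2) *
      ‖((g⁻¹ • segPt ξ t : PBall) : E3) - (q : E3)‖ ^ 2) (𝓝[<] (1:ℝ))
      (𝓝 ((1:ℝ) ^ 2 * lamE p * (1 - t' ^ 2) *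
        ‖((g⁻¹ • ξ : PBall) : E3) - (q : E3)‖ ^ 2)) := by
    apply Tendsto.mul _ ((hval.sub tendsto_const_nhds).norm.pow 2)
    apply Tendsto.mul _ tendsto_const_nhds
    apply Tendsto.mul _ tendsto_const_nhds
    exact ((continuous_pow 2).tendsto (1:ℝ)).mono_left nhdsWithin_le_nhds
  have ID := tendsto_nhds_unique tX (tY.congr' (by
    filter_upwards [hmemIoo] with t ht using (key3 t ht).symm))
  -- Y∞ ≥ (β/2)²
  have hgsph : (g⁻¹ • ξ : PBall) ∈ Sph := smul_mem_sph hact g⁻¹ hξ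
  have hgnorm : ‖((g⁻¹ • ξ : PBall) : E3)‖ = 1 := (mem_sph_iff _).mp hgsph
  have hYinf : (β / 2) ^ 2 ≤ ‖((g⁻¹ • ξ : PBall) : E3) - (q : E3)‖ ^ 2 := by
    have h21 := norm_sub_norm_le ((g⁻¹ • ξ : PBall) : E3) (q : E3)
    rw [hgnorm] at h21
    have h22 : lamE q = 1 - ‖(q : E3)‖ ^ 2 := rfl
    have h23 := pnorm_le_one q
    have h24 := norm_nonneg (q : E3)
    have h25 : β / 2 ≤ 1 - ‖(q : E3)‖ := by nlinarith
    nlinarith [norm_nonneg (((g⁻¹ • ξ : PBall) : E3) - (q : E3))]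
  -- conclude
  have ht'2 : (0:ℝ) < 1 - t' := by linarith
  have ht'3 : (1:ℝ) - t' ≤ 1 - t' ^ 2 := by nlinarith
  have hXinf : (3 * β ^ 2 / 16) ^ 2 ≤ ‖((g⁻¹ • ξ : PBall) : E3) - (p : E3)‖ ^ 2 := by
    set Xinf : ℝ := ‖((g⁻¹ • ξ : PBall) : E3) - (p : E3)‖ ^ 2 with hXinfdef
    have hXinf0 : 0 ≤ Xinf := sq_nonneg _
    have h26 : lamE p * (1 - t' ^ 2) * (β / 2) ^ 2 ≤ Xinf * (1 - t') ^ 2 * lamE q := by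
      rw [ID]
      have hc : (0:ℝ) ≤ lamE p * (1 - t' ^ 2) :=
        mul_nonneg hlamp0 (by nlinarith)
      have h26a := mul_le_mul_of_nonneg_left hYinf hc
      linarith [h26a]
    have h27 : Xinf * (1 - t') ^ 2 * lamE q ≤ Xinf * (1 - t') ^ 2 := by
      have h27a := mul_le_mul_of_nonneg_left hqle1 (mul_nonneg hXinf0 (sq_nonneg (1 - t')))
      rw [mul_one] at h27a
      calc Xinf * (1 - t') ^ 2 * lamE q = Xinf * (1 - t') ^ 2 * lamE q := rfl
        _ ≤ Xinf * (1 - t') ^ 2 := h27a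
    have h28 : (3 * β / 8) ^ 2 * (1 - t' ^ 2) * ((1 - t' ^ 2) * (β / 2) ^ 2)
        ≤ lamE p * ((1 - t' ^ 2) * (β / 2) ^ 2) := by
      apply mul_le_mul_of_nonneg_right hlp9
      have : (0:ℝ) ≤ 1 - t' ^ 2 := by nlinarith
      positivity
    have h29 : (3 * β ^ 2 / 16) ^ 2 * ((1 - t') * (1 - t'))
        ≤ (3 * β / 8) ^ 2 * (1 - t' ^ 2) * ((1 - t' ^ 2) * (β / 2) ^ 2) := by
      have h30 : (1 - t') * (1 - t') ≤ (1 - t' ^ 2) * (1 - t' ^ 2) :=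
        mul_le_mul ht'3 ht'3 ht'2.le (by nlinarith)
      have h31 := mul_le_mul_of_nonneg_left h30 (sq_nonneg (3 * β ^ 2 / 16))
      calc (3 * β ^ 2 / 16) ^ 2 * ((1 - t') * (1 - t'))
          ≤ (3 * β ^ 2 / 16) ^ 2 * ((1 - t' ^ 2) * (1 - t' ^ 2)) := h31
        _ = (3 * β / 8) ^ 2 * (1 - t' ^ 2) * ((1 - t' ^ 2) * (β / 2) ^ 2) := by ring
    have h32 : (3 * β ^ 2 / 16) ^ 2 * ((1 - t') * (1 - t'))
        ≤ Xinf * ((1 - t') * (1 - t')) := by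
      have hsq : (1 - t') ^ 2 = (1 - t') * (1 - t') := sq (1 - t') ▸ by ring
      calc (3 * β ^ 2 / 16) ^ 2 * ((1 - t') * (1 - t'))
          ≤ lamE p * ((1 - t' ^ 2) * (β / 2) ^ 2) := le_trans h29 h28
        _ = lamE p * (1 - t' ^ 2) * (β / 2) ^ 2 := by ring
        _ ≤ Xinf * (1 - t') ^ 2 * lamE q := h26
        _ ≤ Xinf * (1 - t') ^ 2 := h27
        _ = Xinf * ((1 - t') * (1 - t')) := by ring
    have h33 : (0:ℝ) < (1 - t') * (1 - t') := mul_pos ht'2 ht'2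
    exact le_of_mul_le_mul_right (by linarith [h32]) h33
  have h34 : (0:ℝ) ≤ 3 * β ^ 2 / 16 := by positivity
  by_contra hcon
  push_neg at hcon
  have h35 : ‖((g⁻¹ • ξ : PBall) : E3) - (p : E3)‖ ^ 2 < (3 * β ^ 2 / 16) ^ 2 := by
    have h36 := norm_nonneg (((g⁻¹ • ξ : PBall) : E3) - (p : E3))
    nlinarith [hcon]
  linarith [hXinf]


instance : CompactSpace PBall := isCompact_iff_compactSpace.mp (isCompact_closedBall _ _)

/-- Orbits of injective sequences escape to the boundary sphere. -/
lemma escape {H : Subgroup PSL2C} (hpd : ProperlyDiscontinuous H)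
    {e : ℕ → PSL2C} (hinj : Function.Injective e) (hmem : ∀ k, e k ∈ H) :
    Tendsto (fun k => lamE ((e k • origin : PBall))) atTop (𝓝 0) := by
  have hfin : ∀ r : ℝ, 0 ≤ r → r < 1 →
      {k : ℕ | ‖((e k • origin : PBall) : E3)‖ ≤ r}.Finite := by
    intro r hr0 hr1
    set K : Set PBall := {x : PBall | ‖(x : E3)‖ ≤ r} with hK
    have hKc : IsCompact K :=
      (isClosed_le continuous_subtype_val.norm continuous_const).isCompact
    have hKd : Disjoint K Sph := by
      rw [Set.disjoint_left]
      intro x hxK hxS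
      have h1 : ‖(x : E3)‖ = 1 := hxS
      have h2 : ‖(x : E3)‖ ≤ r := hxK
      rw [h1] at h2
      linarith
    have hpdfin := hpd K hKc hKd
    by_contra hinf
    have hinf' : Set.Infinite {k : ℕ | ‖((e k • origin : PBall) : E3)‖ ≤ r} := hinf
    have himgsub : e '' {k : ℕ | ‖((e k • origin : PBall) : E3)‖ ≤ r}
        ⊆ {g : PSL2C | g ∈ H ∧ ((fun x : PBall => g • x) '' K ∩ K).Nonempty} := by
      rintro g ⟨k, hk, rfl⟩
      refine ⟨hmem k, ⟨(e k • origin : PBall), ⟨⟨origin, ?_, rfl⟩, hk⟩⟩⟩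
      show ‖((origin : PBall) : E3)‖ ≤ r
      rw [origin_val, norm_zero]
      exact hr0
    exact (hpdfin.subset himgsub).not_infinite (hinf'.image hinj.injOn)
  rw [Metric.tendsto_atTop]
  intro ε hε
  rcases le_or_gt ε 1 with hε1 | hε1
  · set r : ℝ := Real.sqrt (1 - ε) with hr
    have hr0 : 0 ≤ r := Real.sqrt_nonneg _
    have hr2 : r ^ 2 = 1 - ε := Real.sq_sqrt (by linarith)
    have hr1 : r < 1 := by nlinarith
    obtain ⟨N, hN⟩ := (hfin r hr0 hr1).bddAbove
    refine ⟨N + 1, fun k hk => ?_⟩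
    have hknot : ¬ (‖((e k • origin : PBall) : E3)‖ ≤ r) := by
      intro hmem'
      have h5 := hN hmem'
      omega
    push_neg at hknot
    have h6 : 1 - ε < ‖((e k • origin : PBall) : E3)‖ ^ 2 := by nlinarith
    have h7 : 0 ≤ lamE (e k • origin : PBall) := lamE_nonneg _
    rw [Real.dist_eq, sub_zero, abs_of_nonneg h7]
    have h8 : lamE (e k • origin : PBall)
        = 1 - ‖((e k • origin : PBall) : E3)‖ ^ 2 := rfl
    rw [h8]
    linarith
  · refine ⟨0, fun k _ => ?_⟩
    have h7 := lamE_nonneg (e k • origin : PBall)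
    have h9 := lamE_le_one (e k • origin : PBall)
    rw [Real.dist_eq, sub_zero, abs_of_nonneg h7]
    linarith

/-- The limit set is invariant. -/
lemma smul_limitSet (hact : IsMobiusAction) {H : Subgroup PSL2C} {γ : PSL2C} (hγ : γ ∈ H)
    {z : PBall} (hz : z ∈ limitSet H) : (γ • z : PBall) ∈ limitSet H := by
  obtain ⟨hz1, hz2⟩ := hz
  constructor
  · have h1 : (fun x : PBall => γ • x) '' orbitSet H ⊆ orbitSet H := by
      rintro _ ⟨x, ⟨g, hg, rfl⟩, rfl⟩
      exact ⟨γ * g, H.mul_mem hγ hg, by rw [mul_smul]⟩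
    have h2 := image_closure_subset_closure_image (s := orbitSet H) (hact.2.2.1 γ)
    have h3 : (γ • z : PBall) ∈ (fun x : PBall => γ • x) '' closure (orbitSet H) :=
      ⟨z, hz1, rfl⟩
    exact closure_mono h1 (h2 h3)
  · exact smul_mem_sph hact γ hz2


lemma lamE_continuous : Continuous lamE :=
  continuous_const.sub (continuous_subtype_val.norm.pow 2)

lemma pdist_eq (x y : PBall) : dist x y = ‖(x : E3) - (y : E3)‖ := by
  rw [Subtype.dist_eq, dist_eq_norm]

/-- If an isometry sends the origin near the sphere, it pulls at least the nearer of two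
distinct boundary points toward the image of the origin. -/
lemma min_est (hact : IsMobiusAction) (h : PSL2C) {x y : PBall}
    (hx : x ∈ Sph) (hy : y ∈ Sph) (hne : x ≠ y)
    (hle : ‖((h • x : PBall) : E3) - ((h • origin : PBall) : E3)‖
      ≤ ‖((h • y : PBall) : E3) - ((h • origin : PBall) : E3)‖) :
    ‖((h • x : PBall) : E3) - ((h • origin : PBall) : E3)‖
      ≤ Real.sqrt (2 * lamE (h • origin : PBall) / ‖(x : E3) - (y : E3)‖) := by
  have hδ : 0 < ‖(x : E3) - (y : E3)‖ := by
    rw [norm_pos_iff, sub_ne_zero]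
    exact fun hh => hne (Subtype.ext hh)
  have hpb := prod_bound hact h hx hy
  set dA : ℝ := ‖((h • x : PBall) : E3) - ((h • origin : PBall) : E3)‖ with hdA
  set dB : ℝ := ‖((h • y : PBall) : E3) - ((h • origin : PBall) : E3)‖ with hdB
  set L : ℝ := lamE (h • origin : PBall) with hLd
  set δ : ℝ := ‖(x : E3) - (y : E3)‖ with hδd
  have hA0 : 0 ≤ dA := norm_nonneg _
  have hB0 : 0 ≤ dB := norm_nonneg _
  have hL0 : 0 ≤ L := lamE_nonneg _
  have hsq : dA ^ 2 ≤ dB ^ 2 := by nlinarith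
  have h2 : dA ^ 2 * δ ^ 2 * dA ^ 2 ≤ dA ^ 2 * δ ^ 2 * dB ^ 2 :=
    mul_le_mul_of_nonneg_left hsq (by positivity)
  have h1 : (dA ^ 2 * δ) ^ 2 ≤ (2 * L) ^ 2 := by nlinarith [hpb, h2]
  have h3 : dA ^ 2 * δ ≤ 2 * L := by
    by_contra hcon
    push_neg at hcon
    have h4 : (2 * L) * (2 * L) < (dA ^ 2 * δ) * (dA ^ 2 * δ) :=
      mul_self_lt_mul_self (by linarith) hcon
    nlinarith
  have h5 : dA ^ 2 ≤ 2 * L / δ := (le_div_iff₀ hδ).mpr h3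
  calc dA = Real.sqrt (dA ^ 2) := (Real.sqrt_sq hA0).symm
    _ ≤ Real.sqrt (2 * L / δ) := Real.sqrt_le_sqrt h5

end JO

end AuxProof


/-- **Lemma 4.1 (Jeon–Ohshika).** Let `F` be a minimally parabolic geometrically finite
Kleinian group, `(G,ρ) ∈ D(F)` and `î : Λ_F → Λ_G` the Cannon–Thurston map. If the
fibre `î⁻¹(ξ)` of a point `ξ ∈ Λ_G` contains more than one point, then `ξ` is not a
conical limit point of `G`. -/
theorem noninjective_point_is_not_conical
    [MulAction PSL2C PBall] (hact : IsMobiusAction)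
    (F : Subgroup PSL2C) (hF : IsKleinian F) (hFgf : GeometricallyFinite F)
    (hFmp : MinimallyParabolic F)
    (ρ : F →* PSL2C) (hρ : InDeformationSpace F ρ)
    (ihat : PBall → PBall) (hCT : IsCannonThurston F ρ ihat)
    (ξ : PBall)
    (hfibre : ∃ a b : PBall, a ∈ limitSet F ∧ b ∈ limitSet F ∧ a ≠ b ∧
      ihat a = ξ ∧ ihat b = ξ) :
    ξ ∉ conicalLimitSet ρ.range := by
  intro hcon
  classical
  obtain ⟨hξΛ, C, hinf⟩ := hcon
  have hξS : ξ ∈ Sph := hξΛ.2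
  obtain ⟨a, b, haΛ, hbΛ, hab, hia, hib⟩ := hfibre
  have haS : a ∈ Sph := haΛ.2
  have hbS : b ∈ Sph := hbΛ.2
  -- enumerate the conical family
  have hemb := hinf.natEmbedding
  set gseq : ℕ → PSL2C := fun k => ((hemb k : {g : PSL2C | g ∈ ρ.range ∧
      ∃ t ∈ Set.Ico (0 : ℝ) 1, hdist (g • origin) (segPt ξ t) ≤ C}) : PSL2C) with hgseqdef
  have hgprop : ∀ k, gseq k ∈ ρ.range ∧
      ∃ t ∈ Set.Ico (0 : ℝ) 1, hdist (gseq k • origin) (segPt ξ t) ≤ C :=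
    fun k => (hemb k).2
  have hginj : Function.Injective gseq := fun k l hkl =>
    hemb.injective (Subtype.coe_injective hkl)
  choose tfun ht1 ht2 using fun k => (hgprop k).2
  choose fseq hfρ using fun k => MonoidHom.mem_range.mp (hgprop k).1
  have hfinj : Function.Injective fseq := fun k l hkl =>
    hginj (by rw [← hfρ k, ← hfρ l, hkl])
  -- escape to the boundary on both sides
  have hFsidemem : ∀ k, ((fseq k : PSL2C))⁻¹ ∈ F :=
    fun k => F.inv_mem (SetLike.coe_mem (fseq k))
  have hFinv_inj : Function.Injective (fun k => ((fseq k : PSL2C))⁻¹) := by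
    intro k l hkl
    exact hfinj (Subtype.coe_injective (inv_injective hkl))
  have hFlam := JO.escape hF.2.2 hFinv_inj hFsidemem
  have hGmem : ∀ k, (gseq k)⁻¹ ∈ ρ.range := fun k => ρ.range.inv_mem (hgprop k).1
  have hGinv_inj : Function.Injective (fun k => (gseq k)⁻¹) := fun k l hkl =>
    hginj (inv_injective hkl)
  have hGlam := JO.escape hρ.2.2.2 hGinv_inj hGmem
  -- a limit of the √-bound, used in both branches
  have hsqrt : ∀ (ψ : ℕ → ℕ), StrictMono ψ → ∀ δv : ℝ, 0 < δv →
      Tendsto (fun k => Real.sqrt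
        (2 * JO.lamE ((((fseq (ψ k) : PSL2C))⁻¹ • origin : PBall)) / δv)) atTop (𝓝 0) := by
    intro ψ hψ δv hδv
    have l1 : Tendsto (fun k =>
        JO.lamE ((((fseq (ψ k) : PSL2C))⁻¹ • origin : PBall))) atTop (𝓝 0) :=
      hFlam.comp hψ.tendsto_atTop
    have l2 := (l1.const_mul (2:ℝ)).div_const δv
    rw [mul_zero, zero_div] at l2
    have l3 : Tendsto Real.sqrt (𝓝 0) (𝓝 0) := by
      have l4 := Real.continuous_sqrt.tendsto 0
      rwa [Real.sqrt_zero] at l4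
    exact l3.comp l2
  -- one of the two fibre points is pulled to the orbit limit along a subsequence
  have hmain : ∃ c : PBall, c ∈ limitSet F ∧ ihat c = ξ ∧ ∃ ψ : ℕ → ℕ, StrictMono ψ ∧
      Tendsto (fun k => ‖((((fseq (ψ k) : PSL2C))⁻¹ • c : PBall) : E3)
        - ((((fseq (ψ k) : PSL2C))⁻¹ • origin : PBall) : E3)‖) atTop (𝓝 0) := by
    by_cases hP : Set.Infinite {k : ℕ |
      ‖((((fseq k : PSL2C))⁻¹ • a : PBall) : E3) - ((((fseq k : PSL2C))⁻¹ • origin : PBall) : E3)‖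
        ≤ ‖((((fseq k : PSL2C))⁻¹ • b : PBall) : E3) - ((((fseq k : PSL2C))⁻¹ • origin : PBall) : E3)‖}
    · set pr : ℕ → Prop := fun k =>
        ‖((((fseq k : PSL2C))⁻¹ • a : PBall) : E3) - ((((fseq k : PSL2C))⁻¹ • origin : PBall) : E3)‖
          ≤ ‖((((fseq k : PSL2C))⁻¹ • b : PBall) : E3) - ((((fseq k : PSL2C))⁻¹ • origin : PBall) : E3)‖
        with hprdef
      refine ⟨a, haΛ, hia, Nat.nth pr, Nat.nth_strictMono hP, ?_⟩
      have hδab : 0 < ‖(a : E3) - (b : E3)‖ := by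
        rw [norm_pos_iff, sub_ne_zero]
        exact fun hh => hab (Subtype.ext hh)
      apply tendsto_of_tendsto_of_tendsto_of_le_of_le tendsto_const_nhds
        (hsqrt (Nat.nth pr) (Nat.nth_strictMono hP) _ hδab)
        (fun k => norm_nonneg _)
      intro k
      exact JO.min_est hact _ haS hbS hab (Nat.nth_mem_of_infinite hP k)
    · have hPfin := Set.not_infinite.mp hP
      obtain ⟨N, hN⟩ := hPfin.bddAbove
      refine ⟨b, hbΛ, hib, id, strictMono_id, ?_⟩
      have hδba : 0 < ‖(b : E3) - (a : E3)‖ := by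
        rw [norm_pos_iff, sub_ne_zero]
        exact fun hh => hab (Subtype.ext hh.symm)
      apply tendsto_of_tendsto_of_tendsto_of_le_of_le' tendsto_const_nhds
        (hsqrt id strictMono_id _ hδba)
        (Filter.Eventually.of_forall fun k => norm_nonneg _)
      rw [eventually_atTop]
      refine ⟨N + 1, fun k hk => ?_⟩
      have hknot : ¬ (‖((((fseq k : PSL2C))⁻¹ • a : PBall) : E3)
          - ((((fseq k : PSL2C))⁻¹ • origin : PBall) : E3)‖
        ≤ ‖((((fseq k : PSL2C))⁻¹ • b : PBall) : E3)
          - ((((fseq k : PSL2C))⁻¹ • origin : PBall) : E3)‖) := by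
        intro hmem'
        have h5 := hN hmem'
        omega
      push_neg at hknot
      exact JO.min_est hact _ hbS haS (fun hh => hab hh.symm) hknot.le
  obtain ⟨c, hcΛ, hic, ψ, hψmono, hcnear⟩ := hmain
  -- extract a convergent subsequence of the F-side orbit
  obtain ⟨w, -, φ2, hφ2, hwten⟩ := isCompact_univ.tendsto_subseq
    (x := fun k => ((((fseq (ψ k) : PSL2C))⁻¹ • origin : PBall))) (fun k => Set.mem_univ _)
  have hφmono : StrictMono (fun n => ψ (φ2 n)) := hψmono.comp hφ2
  -- w is a limit point of F
  have hworb : ∀ n, ((((fseq (ψ (φ2 n)) : PSL2C))⁻¹ • origin : PBall)) ∈ orbitSet F :=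
    fun n => ⟨_, hFsidemem _, rfl⟩
  have hwcl : w ∈ closure (orbitSet F) :=
    mem_closure_of_tendsto hwten (Filter.Eventually.of_forall hworb)
  have hlam1 : Tendsto (fun n =>
      JO.lamE ((((fseq (ψ (φ2 n)) : PSL2C))⁻¹ • origin : PBall))) atTop (𝓝 (JO.lamE w)) :=
    (JO.lamE_continuous.tendsto w).comp hwten
  have hlam2 : Tendsto (fun n =>
      JO.lamE ((((fseq (ψ (φ2 n)) : PSL2C))⁻¹ • origin : PBall))) atTop (𝓝 0) :=
    hFlam.comp hφmono.tendsto_atTop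
  have hlamw : JO.lamE w = 0 := tendsto_nhds_unique hlam1 hlam2
  have hwS : w ∈ Sph := by
    rw [JO.mem_sph_iff]
    have h1 := JO.pnorm_le_one w
    have h2 : 1 - ‖(w : E3)‖ ^ 2 = 0 := hlamw
    have h3 : (1 - ‖(w : E3)‖) * (1 + ‖(w : E3)‖) = 0 := by ring_nf; ring_nf at h2; linarith
    rcases mul_eq_zero.mp h3 with h4 | h4
    · linarith
    · linarith [norm_nonneg (w : E3)]
  have hwΛ : w ∈ limitSet F := ⟨hwcl, hwS⟩
  -- Cannon–Thurston orbit-limit property: G-orbit converges to ihat w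
  have hσten : Tendsto (fun n =>
      ((((fseq (ψ (φ2 n)))⁻¹ : F) : PSL2C) • origin : PBall)) atTop (𝓝 w) := hwten
  have h5 := hCT.2.2.2.2 (fun n => (fseq (ψ (φ2 n)))⁻¹) w hwΛ hσten
  have hBten : Tendsto (fun n =>
      (((gseq (ψ (φ2 n)))⁻¹ : PSL2C) • origin : PBall)) atTop (𝓝 (ihat w)) := by
    apply h5.congr
    intro n
    rw [map_inv, hfρ]
  -- equivariance and continuity: the pulled-back ξ's also converge to ihat w
  have hceq : ∀ n, ihat ((((fseq (ψ (φ2 n)) : PSL2C))⁻¹ • c : PBall))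
      = (((gseq (ψ (φ2 n)))⁻¹ : PSL2C) • ξ : PBall) := by
    intro n
    have h6 := hCT.2.2.2.1 ((fseq (ψ (φ2 n)))⁻¹) c hcΛ
    rw [map_inv, hfρ, hic] at h6
    exact h6
  have hcmem : ∀ n, ((((fseq (ψ (φ2 n)) : PSL2C))⁻¹ • c : PBall)) ∈ limitSet F :=
    fun n => JO.smul_limitSet hact (hFsidemem _) hcΛ
  have hcw : Tendsto (fun n => ((((fseq (ψ (φ2 n)) : PSL2C))⁻¹ • c : PBall))) atTop (𝓝 w) := by
    rw [tendsto_iff_dist_tendsto_zero]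
    have hsum : Tendsto (fun n =>
        ‖((((fseq (ψ (φ2 n)) : PSL2C))⁻¹ • c : PBall) : E3)
          - ((((fseq (ψ (φ2 n)) : PSL2C))⁻¹ • origin : PBall) : E3)‖
        + dist ((((fseq (ψ (φ2 n)) : PSL2C))⁻¹ • origin : PBall)) w) atTop (𝓝 (0 + 0)) :=
      (hcnear.comp hφ2.tendsto_atTop).add (tendsto_iff_dist_tendsto_zero.mp hwten)
    rw [add_zero] at hsum
    apply tendsto_of_tendsto_of_tendsto_of_le_of_le tendsto_const_nhds hsum
      (fun n => dist_nonneg)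
    intro n
    calc dist ((((fseq (ψ (φ2 n)) : PSL2C))⁻¹ • c : PBall)) w
        ≤ dist ((((fseq (ψ (φ2 n)) : PSL2C))⁻¹ • c : PBall))
            ((((fseq (ψ (φ2 n)) : PSL2C))⁻¹ • origin : PBall))
          + dist ((((fseq (ψ (φ2 n)) : PSL2C))⁻¹ • origin : PBall)) w := dist_triangle _ _ _
      _ = _ := by rw [JO.pdist_eq]
  have hAten : Tendsto (fun n =>
      (((gseq (ψ (φ2 n)))⁻¹ : PSL2C) • ξ : PBall)) atTop (𝓝 (ihat w)) := by
    have hwithin : Tendsto (fun n => ((((fseq (ψ (φ2 n)) : PSL2C))⁻¹ • c : PBall))) atTop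
        (𝓝[limitSet F] w) :=
      tendsto_nhdsWithin_iff.mpr ⟨hcw, Filter.Eventually.of_forall hcmem⟩
    have h7 := (hCT.2.2.1 w hwΛ).tendsto.comp hwithin
    exact h7.congr hceq
  -- the separation estimate yields the contradiction
  have hcosh := Real.one_le_cosh C
  have hden : (0:ℝ) < 1 + (Real.cosh C - 1) / 2 := by linarith
  have hβpos : (0:ℝ) < 1 / (1 + (Real.cosh C - 1) / 2) := by positivity
  have hεpos : (0:ℝ) < 3 * (1 / (1 + (Real.cosh C - 1) / 2)) ^ 2 / 32 := by positivity
  have hGsmall : ∀ᶠ n in atTop,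
      JO.lamE (((gseq (ψ (φ2 n)))⁻¹ • origin : PBall)) < (1 / (1 + (Real.cosh C - 1) / 2)) / 4 :=
    (hGlam.comp hφmono.tendsto_atTop).eventually_lt_const (by positivity)
  obtain ⟨N1, hN1⟩ := Metric.tendsto_atTop.mp hAten _ hεpos
  obtain ⟨N2, hN2⟩ := Metric.tendsto_atTop.mp hBten _ hεpos
  obtain ⟨N3, hN3⟩ := eventually_atTop.mp hGsmall
  set n : ℕ := max N1 (max N2 N3) with hn
  have e1 := hN1 n (le_max_left _ _)
  have e2 := hN2 n (le_trans (le_max_left _ _) (le_max_right _ _))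
  have e3 := hN3 n (le_trans (le_max_right _ _) (le_max_right _ _))
  have e4 := JO.separation hact hξS (ht1 (ψ (φ2 n))).1 (ht1 (ψ (φ2 n))).2
    (ht2 (ψ (φ2 n))) e3.le
  have e5 : dist (((gseq (ψ (φ2 n)))⁻¹ : PSL2C) • ξ : PBall)
        (((gseq (ψ (φ2 n)))⁻¹ : PSL2C) • origin : PBall)
      ≤ dist (((gseq (ψ (φ2 n)))⁻¹ : PSL2C) • ξ : PBall) (ihat w)
        + dist (ihat w) (((gseq (ψ (φ2 n)))⁻¹ : PSL2C) • origin : PBall) := dist_triangle _ _ _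
  rw [JO.pdist_eq] at e5
  have e6 : dist (ihat w) (((gseq (ψ (φ2 n)))⁻¹ : PSL2C) • origin : PBall)
      < 3 * (1 / (1 + (Real.cosh C - 1) / 2)) ^ 2 / 32 := by
    rw [dist_comm]; exact e2
  linarith [e1, e4, e5, e6]
end
end

section
/- In the setting of the lemma on End_F(G), let A and B be disjoint closed subsets of Λ_F, set 𝖠 := proj₁(End_F(G) ∩ (A × B)), and let Z₂ be the set of points a ∈ Λ_F such that î⁻¹(î(a)) has more than two points. Then the restriction of î to 𝖠 ∖ Z₂ is a homeomorphism onto its image. -/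
noncomputable section

open MeasureTheory Filter Topology Set

/-- Auxiliary topological lemma: if `f` is continuous on a compact closed set `K`,
`S ⊆ K`, and every point of `K` sharing an `f`-value with a point of `S` equals it,
then `f` restricted to `S` is a homeomorphism onto its image. -/
theorem aux_homeo {X Y : Type*} [TopologicalSpace X] [TopologicalSpace Y] [T2Space Y]
    (f : X → Y) (K S : Set X) (hK : IsCompact K) (hSK : S ⊆ K)
    (hf : ContinuousOn f K)
    (hkey : ∀ x ∈ S, ∀ y ∈ K, f y = f x → y = x) :
    ∃ e : S ≃ₜ (f '' S : Set Y), ∀ x : S, (e x : Y) = f x := by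
  let F : S → (f '' S : Set Y) := fun x => ⟨f x, Set.mem_image_of_mem f x.2⟩
  have hFcont : Continuous F :=
    Continuous.subtype_mk ((hf.mono hSK).restrict) _
  have hFbij : Function.Bijective F := by
    constructor
    · intro a b hab
      have h : f (a : X) = f (b : X) := congrArg Subtype.val hab
      exact Subtype.ext (hkey b b.2 a (hSK a.2) h)
    · rintro ⟨t, x, hxS, rfl⟩
      exact ⟨⟨x, hxS⟩, rfl⟩
  have hFclosed : IsClosedMap F := by
    intro D hD
    obtain ⟨C, hC, rfl⟩ := isClosed_induced_iff.mp hD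
    have hEcomp : IsCompact (C ∩ K) := hK.inter_left hC
    have himg : IsClosed (f '' (C ∩ K)) :=
      (hEcomp.image_of_continuousOn (hf.mono Set.inter_subset_right)).isClosed
    have himage_eq : F '' (Subtype.val ⁻¹' C) = Subtype.val ⁻¹' (f '' (C ∩ K)) := by
      ext t
      constructor
      · rintro ⟨x, hx, rfl⟩
        exact ⟨(x : X), ⟨hx, hSK x.2⟩, rfl⟩
      · rintro ⟨y, ⟨hyC, hyK⟩, hyf⟩
        obtain ⟨x, hxS, hxf⟩ := t.2
        have hyx : y = x := hkey x hxS y hyK (hyf.trans hxf.symm)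
        subst hyx
        exact ⟨⟨y, hxS⟩, hyC, Subtype.ext hyf⟩
    rw [himage_eq]
    exact himg.preimage continuous_subtype_val
  let e₀ : S ≃ (f '' S : Set Y) := Equiv.ofBijective F hFbij
  have hFopen : IsOpenMap F := by
    intro U hU
    have h1 : F '' Uᶜ = (F '' U)ᶜ := Set.image_compl_eq hFbij
    have h2 : IsClosed (F '' Uᶜ) := hFclosed _ hU.isClosed_compl
    rw [h1] at h2
    simpa using h2.isOpen_compl
  exact ⟨Equiv.toHomeomorphOfContinuousOpen e₀ hFcont hFopen, fun x => rfl⟩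

/-- **(From the proof of Lemma 4.4, Jeon–Ohshika.)** For disjoint closed subsets
`A, B ⊆ Λ_F`, letting `𝖠 := proj₁(End_F(G) ∩ (A × B))` and `Z₂` be the (countable) set
of points `a ∈ Λ_F` whose fibre `î⁻¹(î(a))` has more than two points, the restriction
of the Cannon–Thurston map `î` to `𝖠 ∖ Z₂` is a homeomorphism onto its image. -/
theorem restriction_to_A_minus_Z2_homeomorphism
    [MulAction PSL2C PBall] (hact : IsMobiusAction)
    (F : Subgroup PSL2C) (hF : IsKleinian F) (hFgf : GeometricallyFinite F)
    (hFmp : MinimallyParabolic F) (hFne : NonElementary F)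
    (ρ : F →* PSL2C) (hρ : InDeformationSpace F ρ)
    (ihat : PBall → PBall) (hCT : IsCannonThurston F ρ ihat)
    (A B : Set PBall) (hA : IsClosed A) (hB : IsClosed B) (hAB : Disjoint A B)
    (hAsub : A ⊆ limitSet F) (hBsub : B ⊆ limitSet F) :
    ∃ e : (Prod.fst '' (EndPairs (limitSet F) ihat ∩ A ×ˢ B) \
          {a : PBall | a ∈ limitSet F ∧ ∃ b c d : PBall,
            b ∈ limitSet F ∧ c ∈ limitSet F ∧ d ∈ limitSet F ∧
            b ≠ c ∧ b ≠ d ∧ c ≠ d ∧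
            ihat b = ihat a ∧ ihat c = ihat a ∧ ihat d = ihat a} : Set PBall) ≃ₜ
        (ihat '' (Prod.fst '' (EndPairs (limitSet F) ihat ∩ A ×ˢ B) \
          {a : PBall | a ∈ limitSet F ∧ ∃ b c d : PBall,
            b ∈ limitSet F ∧ c ∈ limitSet F ∧ d ∈ limitSet F ∧
            b ≠ c ∧ b ≠ d ∧ c ≠ d ∧
            ihat b = ihat a ∧ ihat c = ihat a ∧ ihat d = ihat a}) : Set PBall),
      ∀ x : (Prod.fst '' (EndPairs (limitSet F) ihat ∩ A ×ˢ B) \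
          {a : PBall | a ∈ limitSet F ∧ ∃ b c d : PBall,
            b ∈ limitSet F ∧ c ∈ limitSet F ∧ d ∈ limitSet F ∧
            b ≠ c ∧ b ≠ d ∧ c ≠ d ∧
            ihat b = ihat a ∧ ihat c = ihat a ∧ ihat d = ihat a} : Set PBall),
        (e x : PBall) = ihat x := by
  classical
  haveI : CompactSpace PBall :=
    isCompact_iff_compactSpace.mp (isCompact_closedBall (0 : E3) 1)
  have hcont : ContinuousOn ihat (limitSet F) := hCT.2.2.1
  -- the set C := EndPairs ∩ A ×ˢ B is compact
  have hCeq : EndPairs (limitSet F) ihat ∩ A ×ˢ B =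
      (A ×ˢ B) ∩ {p : PBall × PBall | ihat p.1 = ihat p.2} := by
    ext p
    constructor
    · rintro ⟨⟨_, heq⟩, hp⟩
      exact ⟨hp, heq⟩
    · rintro ⟨hp, heq⟩
      exact ⟨⟨⟨hAsub hp.1, hBsub hp.2, hAB.ne_of_mem hp.1 hp.2⟩, heq⟩, hp⟩
  have hABclosed : IsClosed (A ×ˢ B) := hA.prod hB
  have hg : ContinuousOn (fun p : PBall × PBall => (ihat p.1, ihat p.2)) (A ×ˢ B) := by
    refine ContinuousOn.prodMk ?_ ?_
    · exact hcont.comp continuous_fst.continuousOn (fun p hp => hAsub hp.1)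
    · exact hcont.comp continuous_snd.continuousOn (fun p hp => hBsub hp.2)
  have hCclosed : IsClosed (EndPairs (limitSet F) ihat ∩ A ×ˢ B) := by
    rw [hCeq]
    have : {p : PBall × PBall | ihat p.1 = ihat p.2} =
        (fun p : PBall × PBall => (ihat p.1, ihat p.2)) ⁻¹'
          {q : PBall × PBall | q.1 = q.2} := rfl
    rw [this]
    exact hg.preimage_isClosed_of_isClosed hABclosed isClosed_diagonal
  have hCcomp : IsCompact (EndPairs (limitSet F) ihat ∩ A ×ˢ B) :=
    (hA.isCompact.prod hB.isCompact).of_isClosed_subset hCclosed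
      Set.inter_subset_right
  have hKcomp : IsCompact (Prod.fst '' (EndPairs (limitSet F) ihat ∩ A ×ˢ B)) :=
    hCcomp.image continuous_fst
  have hKA : Prod.fst '' (EndPairs (limitSet F) ihat ∩ A ×ˢ B) ⊆ A := by
    rintro x ⟨p, hp, rfl⟩
    exact hp.2.1
  have hKL : Prod.fst '' (EndPairs (limitSet F) ihat ∩ A ×ˢ B) ⊆ limitSet F :=
    hKA.trans hAsub
  refine aux_homeo ihat _ _ hKcomp Set.diff_subset (hcont.mono hKL) ?_
  rintro x ⟨hxK, hxZ⟩ y hyK heq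
  by_contra hne
  obtain ⟨p, hp, rfl⟩ := hxK
  obtain ⟨q, hq, rfl⟩ := hyK
  -- p.1 ∈ A, p.2 ∈ B, ihat p.1 = ihat p.2, similarly for q
  have hp1A : p.1 ∈ A := hp.2.1
  have hq1A : q.1 ∈ A := hq.2.1
  have hq2B : q.2 ∈ B := hq.2.2
  have hpq : ihat p.1 = ihat p.2 := hp.1.2
  have hqq : ihat q.1 = ihat q.2 := hq.1.2
  apply hxZ
  refine ⟨hAsub hp1A, p.1, q.1, q.2, hAsub hp1A, hAsub hq1A, hBsub hq2B,
    ?_, ?_, ?_, rfl, heq, ?_⟩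
  · exact fun h => hne (h ▸ rfl)
  · exact hAB.ne_of_mem hp1A hq2B
  · exact hAB.ne_of_mem hq1A hq2B
  · exact hqq.symm.trans heq
end
end
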